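/- Let n ≥ 2. The map Ψ is a bijection from Sp(1)ⁿ × 𝒪 onto 𝒟. In particular: (i) for every Θ = (Θ_1, …, Θ_n) with Θ_j ∈ ℍ, |Θ_j| = 1, and every w ∈ 𝒪, the matrix Ψ(Θ, w) belongs to Sp(n) and all entries of its last row are nonzero; (ii) Ψ is injective; (iii) every U ∈ 𝒟 is of the form Ψ(Θ, w) for some such pair (Θ, w). -/

import Mathlib

open Quaternion Matrix

/-- The trivialization map `Ψ : Sp(1)ⁿ × 𝒪 → 𝒟` sending `(Θ, w)` to the matrix
with `(i,j)` entry `w_{ij} Θ_j / √(1+|w_j|²)` for `i < n-1` and last-row entry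
`Θ_j / √(1+|w_j|²)`. -/
noncomputable def PsiMap (n : ℕ)
    (p : (Fin n → ℍ[ℝ]) × (Fin (n - 1) → Fin n → ℍ[ℝ])) :
    Matrix (Fin n) (Fin n) ℍ[ℝ] :=
  Matrix.of fun i j =>
    if h : i.val < n - 1 then
      (Real.sqrt (1 + ∑ k : Fin (n - 1), ‖p.2 k j‖ ^ 2))⁻¹ • (p.2 ⟨i.val, h⟩ j * p.1 j)
    else
      (Real.sqrt (1 + ∑ k : Fin (n - 1), ‖p.2 k j‖ ^ 2))⁻¹ • p.1 j

lemma star_mul_self' (a : ℍ[ℝ]) : star a * a = ((‖a‖^2 : ℝ) : ℍ[ℝ]) := by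
  rw [Quaternion.star_mul_self, Quaternion.normSq_eq_norm_mul_self, sq]

lemma self_mul_star' (a : ℍ[ℝ]) : a * star a = ((‖a‖^2 : ℝ) : ℍ[ℝ]) := by
  rw [Quaternion.self_mul_star, Quaternion.normSq_eq_norm_mul_self, sq]

lemma qcoe_sum {M : ℕ} (f : Fin M → ℝ) :
    ((∑ k, f k : ℝ) : ℍ[ℝ]) = ∑ k, ((f k : ℝ) : ℍ[ℝ]) := by
  rw [← Quaternion.algebraMap_def]
  exact map_sum (algebraMap ℝ ℍ[ℝ]) f Finset.univ

lemma qsmul_cancel {r : ℝ} (hr : r ≠ 0) {a b : ℍ[ℝ]} (h : r • a = r • b) : a = b := by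
  have := congrArg (fun x => r⁻¹ • x) h
  simpa [smul_smul, inv_mul_cancel₀ hr] using this

lemma inner_col {M : ℕ} (c d : ℝ) (Θi Θj : ℍ[ℝ]) (wi wj : Fin M → ℍ[ℝ]) :
    (∑ k : Fin M, star (c • (wi k * Θi)) * (d • (wj k * Θj))) + star (c • Θi) * (d • Θj)
      = (c * d) • (star Θi * ((∑ k, star (wi k) * wj k) + 1) * Θj) := by
  simp only [Quaternion.star_smul, StarMul.star_mul, smul_mul_assoc, mul_smul_comm, smul_smul,
    smul_add, Finset.smul_sum, mul_add, add_mul, mul_one, Finset.mul_sum, Finset.sum_mul]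
  congr 1
  · exact Finset.sum_congr rfl fun k _ => by rw [mul_comm c d]; noncomm_ring
  · rw [mul_comm c d]

lemma inner_col2 {M : ℕ} (a b : ℝ) (Θi Θj : ℍ[ℝ]) (ui uj : Fin M → ℍ[ℝ]) :
    (∑ k : Fin M, star (a • (ui k * star Θi)) * (b • (uj k * star Θj)))
      = (a * b) • (Θi * (∑ k, star (ui k) * uj k) * star Θj) := by
  simp only [Quaternion.star_smul, StarMul.star_mul, star_star, smul_mul_assoc, mul_smul_comm,
    smul_smul, Finset.smul_sum, Finset.mul_sum, Finset.sum_mul]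
  exact Finset.sum_congr rfl fun k _ => by rw [mul_comm a b]; noncomm_ring

lemma sum_split {α : Type*} [AddCommMonoid α] {n : ℕ} (hn : 1 ≤ n) (f : Fin n → α) :
    ∑ k, f k = (∑ k : Fin (n-1), f ⟨k.val, by omega⟩) + f ⟨n-1, by omega⟩ := by
  obtain ⟨m, rfl⟩ : ∃ m, n = m + 1 := ⟨n - 1, by omega⟩
  exact Fin.sum_univ_castSucc f

lemma PsiMap_apply_lt (n : ℕ) (hn : 2 ≤ n)
    (p : (Fin n → ℍ[ℝ]) × (Fin (n - 1) → Fin n → ℍ[ℝ])) (k : Fin (n-1)) (j : Fin n) :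
    PsiMap n p ⟨k.val, by omega⟩ j
      = (Real.sqrt (1 + ∑ l : Fin (n-1), ‖p.2 l j‖^2))⁻¹ • (p.2 k j * p.1 j) := by
  simp only [PsiMap, Matrix.of_apply]
  rw [dif_pos (show ((⟨k.val, by omega⟩ : Fin n)).val < n - 1 from k.isLt)]

lemma PsiMap_apply_last (n : ℕ) (hn : 2 ≤ n)
    (p : (Fin n → ℍ[ℝ]) × (Fin (n - 1) → Fin n → ℍ[ℝ])) (j : Fin n) :
    PsiMap n p ⟨n-1, Nat.sub_lt (by omega) Nat.one_pos⟩ j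
      = (Real.sqrt (1 + ∑ l : Fin (n-1), ‖p.2 l j‖^2))⁻¹ • p.1 j := by
  simp only [PsiMap, Matrix.of_apply]
  rw [dif_neg (show ¬ ((⟨n-1, by omega⟩ : Fin n)).val < n - 1 by simp)]

lemma Psi_entry (n : ℕ) (hn : 2 ≤ n)
    (p : (Fin n → ℍ[ℝ]) × (Fin (n - 1) → Fin n → ℍ[ℝ])) (i j : Fin n) :
    ((PsiMap n p)ᴴ * PsiMap n p) i j =
      ((Real.sqrt (1 + ∑ k : Fin (n-1), ‖p.2 k i‖^2))⁻¹ *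
        (Real.sqrt (1 + ∑ k : Fin (n-1), ‖p.2 k j‖^2))⁻¹) •
        (star (p.1 i) * ((∑ k : Fin (n-1), star (p.2 k i) * p.2 k j) + 1) * p.1 j) := by
  rw [Matrix.mul_apply]
  simp only [Matrix.conjTranspose_apply]
  rw [sum_split (by omega) (fun k => star (PsiMap n p k i) * PsiMap n p k j)]
  simp only [PsiMap_apply_lt n hn, PsiMap_apply_last n hn]
  exact inner_col _ _ _ _ _ _

lemma sqrt_inv_sq (s : ℝ) (hs : 0 ≤ s) :
    (Real.sqrt (1+s))⁻¹ * (Real.sqrt (1+s))⁻¹ * (1+s) = 1 := by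
  rw [← mul_inv, Real.mul_self_sqrt (by linarith)]
  exact inv_mul_cancel₀ (by linarith)

/-- `Ψ` is a bijection from `Sp(1)ⁿ × 𝒪` onto
`𝒟 = {U ∈ Sp(n) : all last row entries nonzero}`: it maps into `𝒟`,
is injective on `Sp(1)ⁿ × 𝒪`, and every `U ∈ 𝒟` is of the form `Ψ(Θ, w)`. -/
theorem PsiMap_bijOn (n : ℕ) (hn : 2 ≤ n) :
    Set.BijOn (PsiMap n)
      {p : (Fin n → ℍ[ℝ]) × (Fin (n - 1) → Fin n → ℍ[ℝ]) |
        (∀ j, ‖p.1 j‖ = 1) ∧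
        ∀ i j : Fin n, i < j → ∑ k : Fin (n - 1), star (p.2 k i) * p.2 k j = -1}
      {U : Matrix (Fin n) (Fin n) ℍ[ℝ] |
        Uᴴ * U = 1 ∧ ∀ j : Fin n, U ⟨n - 1, by omega⟩ j ≠ 0} := by
  have hspos : ∀ (w : Fin (n-1) → Fin n → ℍ[ℝ]) (j : Fin n),
      (0:ℝ) ≤ ∑ k : Fin (n-1), ‖w k j‖^2 :=
    fun w j => Finset.sum_nonneg fun k _ => sq_nonneg _
  have hcpos : ∀ (w : Fin (n-1) → Fin n → ℍ[ℝ]) (j : Fin n),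
      (0:ℝ) < (Real.sqrt (1 + ∑ k : Fin (n-1), ‖w k j‖^2))⁻¹ := by
    intro w j
    have := hspos w j
    positivity
  constructor
  · -- MapsTo
    rintro p ⟨hΘ, hw⟩
    constructor
    · refine Matrix.ext fun i j => ?_
      rw [Psi_entry n hn]
      by_cases hij : i = j
      · subst hij
        have hsum : (∑ k : Fin (n-1), star (p.2 k i) * p.2 k i)
            = (((∑ k : Fin (n-1), ‖p.2 k i‖^2 : ℝ)) : ℍ[ℝ]) := by
          rw [qcoe_sum]
          exact Finset.sum_congr rfl fun k _ => star_mul_self' _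
        rw [hsum]
        rw [show (((∑ k : Fin (n-1), ‖p.2 k i‖^2 : ℝ)) : ℍ[ℝ]) + 1
            = (((1 + ∑ k : Fin (n-1), ‖p.2 k i‖^2 : ℝ)) : ℍ[ℝ]) by
          push_cast; exact add_comm _ _]
        rw [← (Quaternion.coe_commute ((1:ℝ) + ∑ k : Fin (n-1), ‖p.2 k i‖^2)
          (star (p.1 i))).eq, mul_assoc, star_mul_self' (p.1 i), hΘ i, one_pow,
          Quaternion.coe_one, mul_one, Quaternion.smul_coe,
          sqrt_inv_sq _ (hspos p.2 i), Quaternion.coe_one, Matrix.one_apply_eq]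
      · have hS : (∑ k : Fin (n-1), star (p.2 k i) * p.2 k j) = -1 := by
          rcases lt_or_gt_of_ne hij with h | h
          · exact hw i j h
          · have := congrArg star (hw j i h)
            simpa [star_sum, StarMul.star_mul] using this
        rw [hS, Matrix.one_apply_ne hij]
        simp
    · intro j
      rw [PsiMap_apply_last n hn]
      refine smul_ne_zero (ne_of_gt (hcpos p.2 j)) ?_
      intro h0
      have := hΘ j
      rw [h0] at this
      simp at this
  constructor
  · -- InjOn
    rintro p ⟨hΘp, _⟩ q ⟨hΘq, _⟩ h
    have hlast : ∀ j, (Real.sqrt (1 + ∑ k : Fin (n-1), ‖p.2 k j‖^2))⁻¹ • p.1 j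
        = (Real.sqrt (1 + ∑ k : Fin (n-1), ‖q.2 k j‖^2))⁻¹ • q.1 j := by
      intro j
      have := congrFun (congrFun h ⟨n-1, by omega⟩) j
      rwa [PsiMap_apply_last n hn, PsiMap_apply_last n hn] at this
    have hc : ∀ j, (Real.sqrt (1 + ∑ k : Fin (n-1), ‖p.2 k j‖^2))⁻¹
        = (Real.sqrt (1 + ∑ k : Fin (n-1), ‖q.2 k j‖^2))⁻¹ := by
      intro j
      have := congrArg norm (hlast j)
      rwa [norm_smul, norm_smul, hΘp j, hΘq j, Real.norm_eq_abs, Real.norm_eq_abs,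
        abs_of_pos (hcpos p.2 j), abs_of_pos (hcpos q.2 j), mul_one, mul_one] at this
    have hΘ : ∀ j, p.1 j = q.1 j := by
      intro j
      have h1 := hlast j
      rw [← hc j] at h1
      exact qsmul_cancel (ne_of_gt (hcpos p.2 j)) h1
    have hΘne : ∀ j, p.1 j ≠ 0 := by
      intro j h0
      have := hΘp j; rw [h0] at this; simp at this
    have hweq : ∀ (k : Fin (n-1)) (j : Fin n), p.2 k j = q.2 k j := by
      intro k j
      have h2 := congrFun (congrFun h ⟨k.val, by omega⟩) j
      rw [PsiMap_apply_lt n hn, PsiMap_apply_lt n hn, ← hc j] at h2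
      have h3 := qsmul_cancel (ne_of_gt (hcpos p.2 j)) h2
      rw [← hΘ j] at h3
      exact mul_right_cancel₀ (hΘne j) h3
    exact Prod.ext (funext hΘ) (funext fun k => funext fun j => hweq k j)
  · -- SurjOn
    rintro U ⟨hU, hrow⟩
    set L : Fin n := ⟨n-1, by omega⟩ with hL
    set r : Fin n → ℝ := fun j => ‖U L j‖ with hrdef
    have hrpos : ∀ j, 0 < r j := fun j => norm_pos_iff.mpr (hrow j)
    have hrne : ∀ j, r j ≠ 0 := fun j => ne_of_gt (hrpos j)
    set Θ : Fin n → ℍ[ℝ] := fun j => (r j)⁻¹ • U L j with hΘdef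
    have hΘnorm : ∀ j, ‖Θ j‖ = 1 := by
      intro j
      rw [hΘdef]
      simp only [norm_smul, Real.norm_eq_abs, abs_of_pos (inv_pos.mpr (hrpos j))]
      exact inv_mul_cancel₀ (hrne j)
    have hUL : ∀ j, U L j = r j • Θ j := by
      intro j
      rw [hΘdef, smul_smul, mul_inv_cancel₀ (hrne j), one_smul]
    have hsΘ : ∀ j, star (Θ j) * Θ j = 1 := by
      intro j; rw [star_mul_self', hΘnorm j]; norm_num
    have hΘsΘ : ∀ j, Θ j * star (Θ j) = 1 := by
      intro j; rw [self_mul_star', hΘnorm j]; norm_num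
    set w : Fin (n-1) → Fin n → ℍ[ℝ] :=
      fun k j => (r j)⁻¹ • (U ⟨k.val, by omega⟩ j * star (Θ j)) with hwdef
    -- column norms
    have hcol : ∀ j, ∑ k : Fin n, ‖U k j‖^2 = 1 := by
      intro j
      have h1 : ((Uᴴ * U) j j) = 1 := by rw [hU]; exact Matrix.one_apply_eq j
      rw [Matrix.mul_apply] at h1
      simp only [Matrix.conjTranspose_apply] at h1
      apply Quaternion.coe_injective
      rw [Quaternion.coe_one, qcoe_sum, ← h1]
      exact Finset.sum_congr rfl fun k _ => (star_mul_self' _).symm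
    have hcolsplit : ∀ j, (∑ k : Fin (n-1), ‖U ⟨k.val, by omega⟩ j‖^2) = 1 - (r j)^2 := by
      intro j
      have := hcol j
      rw [sum_split (by omega) (fun k => ‖U k j‖^2)] at this
      rw [hrdef]
      linarith [this]
    have hwnorm : ∀ j, (1 : ℝ) + ∑ k : Fin (n-1), ‖w k j‖^2 = ((r j)⁻¹)^2 := by
      intro j
      have hterm : ∀ k : Fin (n-1), ‖w k j‖^2 = ((r j)⁻¹)^2 * ‖U ⟨k.val, by omega⟩ j‖^2 := by
        intro k
        rw [hwdef]
        simp only [norm_smul, norm_mul, Quaternion.norm_star, hΘnorm j, mul_one,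
          Real.norm_eq_abs, abs_of_pos (inv_pos.mpr (hrpos j))]
        ring
      rw [Finset.sum_congr rfl fun k _ => hterm k, ← Finset.mul_sum, hcolsplit j]
      have := hrne j
      field_simp
      ring
    have hc : ∀ j, (Real.sqrt (1 + ∑ k : Fin (n-1), ‖w k j‖^2))⁻¹ = r j := by
      intro j
      rw [hwnorm j, Real.sqrt_sq (le_of_lt (inv_pos.mpr (hrpos j))), inv_inv]
    -- orthogonality sums
    have hsumU : ∀ i j : Fin n, i ≠ j →
        (∑ k : Fin (n-1), star (U ⟨k.val, by omega⟩ i) * U ⟨k.val, by omega⟩ j)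
          = -(star (U L i) * U L j) := by
      intro i j hij
      have h1 : ((Uᴴ * U) i j) = 0 := by rw [hU]; exact Matrix.one_apply_ne hij
      rw [Matrix.mul_apply] at h1
      simp only [Matrix.conjTranspose_apply] at h1
      rw [sum_split (by omega) (fun k => star (U k i) * U k j)] at h1
      exact eq_neg_of_add_eq_zero_left h1
    have hwmem : ∀ i j : Fin n, i < j →
        ∑ k : Fin (n-1), star (w k i) * w k j = -1 := by
      intro i j hij
      have key := inner_col2 ((r i)⁻¹) ((r j)⁻¹) (Θ i) (Θ j)
        (fun k : Fin (n-1) => U ⟨k.val, by omega⟩ i) (fun k : Fin (n-1) => U ⟨k.val, by omega⟩ j)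
      rw [hwdef]
      rw [key, hsumU i j (ne_of_lt hij), hUL i, hUL j]
      simp only [Quaternion.star_smul, smul_mul_assoc, mul_smul_comm, smul_smul,
        mul_neg, neg_mul, smul_neg]
      rw [show Θ i * (star (Θ i) * Θ j) * star (Θ j)
          = (Θ i * star (Θ i)) * (Θ j * star (Θ j)) by noncomm_ring]
      rw [hΘsΘ i, hΘsΘ j, mul_one]
      rw [show (r i)⁻¹ * (r j)⁻¹ * (r j * r i) = 1 by
        field_simp [hrne i, hrne j]]
      rw [one_smul]
    refine ⟨(Θ, w), ⟨hΘnorm, hwmem⟩, ?_⟩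
    refine Matrix.ext fun i j => ?_
    simp only [PsiMap, Matrix.of_apply]
    by_cases hi : i.val < n - 1
    · rw [dif_pos hi, hc j]
      have hwval : w ⟨i.val, hi⟩ j = (r j)⁻¹ • (U i j * star (Θ j)) := rfl
      rw [hwval, smul_mul_assoc, smul_smul, mul_inv_cancel₀ (hrne j), one_smul,
        mul_assoc, hsΘ j, mul_one]
    · rw [dif_neg hi, hc j]
      have h2 := i.isLt
      have hieq : i = L := Fin.ext (by show i.val = n - 1; omega)
      rw [hieq, ← hUL j]
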